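/- For every x ∈ X, the function t ↦ f_t(x) is continuous on [0,∞), and it is locally Lipschitz and locally semiconcave on (0,∞) (i.e. for every compact interval [a,b] ⊂ (0,∞) there is a constant C ≥ 0 such that t ↦ f_t(x) − C t² is concave on [a,b]); moreover for every t > 0 the left and right derivatives of s ↦ f_s(x) at t exist and satisfy (d⁻/dt) f_t(x) = −(D⁻_t(x))²/(2t²) and (d⁺/dt) f_t(x) = −(D⁺_t(x))²/(2t²). -/

import Mathlib

/-!
Setting: `(X, d)` is a complete length metric space, `f : X × X → ℝ` is lower
semicontinuous, bounded from below, and satisfies the reverse triangle inequality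
`f(x,z) ≥ f(x,y) + f(y,z)`.  For `t > 0` set `F(t,x;y) := f(x,y) + d(x,y)²/(2t)`,
`f_t(x) := inf_y F(t,x;y)`, and `f_0(x) := f(x,x)`.  `D⁺_t(x)` (resp. `D⁻_t(x)`)
is the largest (resp. smallest) value of `limsup_n d(x,y_n)` (resp. `liminf_n d(x,y_n)`)
among minimizing sequences `(y_n)` of `F(t,x;·)`.
-/

open Filter Topology Metric MeasureTheory
open scoped ENNReal NNReal

noncomputable section

/-- A metric space is a *length space* if the distance between any two points equals the
infimum of the lengths (total variations) of continuous curves joining them. -/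
def IsLengthSpace (X : Type*) [MetricSpace X] : Prop :=
  ∀ x y : X,
    ENNReal.ofReal (dist x y) =
      ⨅ γ : { γ : ℝ → X // ContinuousOn γ (Set.Icc 0 1) ∧ γ 0 = x ∧ γ 1 = y },
        eVariationOn γ.1 (Set.Icc 0 1)

variable {X : Type*} [MetricSpace X]

/-- `FH f t x y = f(x,y) + d(x,y)² / (2t)`. -/
def FH (f : X × X → ℝ) (t : ℝ) (x y : X) : ℝ :=
  f (x, y) + dist x y ^ 2 / (2 * t)

/-- `ft f t x = inf_y (f(x,y) + d(x,y)²/(2t))` for `t ≠ 0`, and `ft f 0 x = f(x,x)`. -/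
def ft (f : X × X → ℝ) (t : ℝ) (x : X) : ℝ :=
  if t = 0 then f (x, x) else ⨅ y : X, FH f t x y

/-- `y : ℕ → X` is a minimizing sequence for `F(t,x;·)`. -/
def MinSeq (f : X × X → ℝ) (t : ℝ) (x : X) (y : ℕ → X) : Prop :=
  Tendsto (fun n => FH f t x (y n)) atTop (𝓝 (ft f t x))

/-- `D⁺_t(x)`: the largest value of `limsup_n d(x, y_n)` among minimizing sequences. -/
def Dplus (f : X × X → ℝ) (t : ℝ) (x : X) : ℝ :=
  sSup { L : ℝ | ∃ y : ℕ → X, MinSeq f t x y ∧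
    Filter.limsup (fun n => dist x (y n)) atTop = L }

/-- `D⁻_t(x)`: the smallest value of `liminf_n d(x, y_n)` among minimizing sequences. -/
def Dminus (f : X × X → ℝ) (t : ℝ) (x : X) : ℝ :=
  sInf { L : ℝ | ∃ y : ℕ → X, MinSeq f t x y ∧
    Filter.liminf (fun n => dist x (y n)) atTop = L }

/-- Descending slope `|∂⁻ g|(x) = limsup_{y→x} (g(y) - g(x))⁻ / d(x,y)`, valued in `[0,∞]`. -/
def descSlope (g : X → ℝ) (x : X) : ℝ≥0∞ :=
  Filter.limsup (fun y => ENNReal.ofReal ((g x - g y) / dist x y)) (𝓝[≠] x)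

/-- The tilt `tilt(f)(x) = limsup_{y→x} (f(x,y))⁻ / d(x,y)`, valued in `[0,∞]`. -/
def tilt (f : X × X → ℝ) (x : X) : ℝ≥0∞ :=
  Filter.limsup (fun y => ENNReal.ofReal ((-f (x, y)) / dist x y)) (𝓝[≠] x)

section HopfLaxLemmas

set_option maxHeartbeats 1000000
set_option linter.unusedSectionVars false

variable {f : X × X → ℝ} {x : X} {C : ℝ} {t s : ℝ}

lemma FH_lb (hC : ∀ p, C ≤ f p) (ht : 0 < t) (y : X) : C ≤ FH f t x y := by
  have : (0:ℝ) ≤ dist x y ^ 2 / (2 * t) := by positivity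
  have := hC (x, y); unfold FH; linarith

lemma bddBelow_FH (hC : ∀ p, C ≤ f p) (ht : 0 < t) :
    BddBelow (Set.range fun y => FH f t x y) :=
  ⟨C, by rintro _ ⟨y, rfl⟩; exact FH_lb hC ht y⟩

lemma ft_pos (ht : t ≠ 0) : ft f t x = ⨅ y : X, FH f t x y := if_neg ht

lemma ft_le (hC : ∀ p, C ≤ f p) (ht : 0 < t) (y : X) : ft f t x ≤ FH f t x y := by
  rw [ft_pos ht.ne']; exact ciInf_le (bddBelow_FH hC ht) y

lemma C_le_ft (hC : ∀ p, C ≤ f p) (ht : 0 < t) : C ≤ ft f t x := by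
  have : Nonempty X := ⟨x⟩
  rw [ft_pos ht.ne']; exact le_ciInf fun y => FH_lb hC ht y

lemma ft_le_fxx (hC : ∀ p, C ≤ f p) (ht : 0 < t) : ft f t x ≤ f (x, x) := by
  have h := ft_le (x := x) hC ht x
  simpa [FH] using h

lemma C_le_fxx (hC : ∀ p, C ≤ f p) : C ≤ f (x, x) := hC _

lemma exists_near_min (hC : ∀ p, C ≤ f p) (ht : 0 < t) {ε : ℝ} (hε : 0 < ε) :
    ∃ y, FH f t x y < ft f t x + ε := by
  have : Nonempty X := ⟨x⟩
  have h : ft f t x < ft f t x + ε := by linarith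
  rw [ft_pos ht.ne'] at h ⊢
  exact exists_lt_of_ciInf_lt h

/-- bound `M`: any `1`-near-minimizer at time `t ≤ b` is within `Mb` of `x`. -/
def Mb (f : X × X → ℝ) (x : X) (C b : ℝ) : ℝ := Real.sqrt (2 * b * (f (x, x) + 1 - C))

lemma Mb_nonneg : 0 ≤ Mb f x C b := Real.sqrt_nonneg _

lemma dist_le_Mb (hC : ∀ p, C ≤ f p) (ht : 0 < t) {b : ℝ} (htb : t ≤ b) {y : X}
    (hy : FH f t x y ≤ ft f t x + 1) : dist x y ≤ Mb f x C b := by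
  have h1 : FH f t x y ≤ f (x, x) + 1 := le_trans hy (by linarith [ft_le_fxx (x := x) hC ht])
  have h2 : C ≤ f (x, y) := hC _
  have h3 : dist x y ^ 2 / (2 * t) ≤ f (x, x) + 1 - C := by unfold FH at h1; linarith
  have h4 : dist x y ^ 2 ≤ 2 * t * (f (x, x) + 1 - C) := by
    have := (div_le_iff₀ (by positivity)).mp h3; linarith
  have h5 : dist x y ^ 2 ≤ 2 * b * (f (x, x) + 1 - C) := by nlinarith [C_le_fxx (x := x) hC]
  calc dist x y = Real.sqrt (dist x y ^ 2) := by
        rw [Real.sqrt_sq dist_nonneg]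
    _ ≤ Mb f x C b := Real.sqrt_le_sqrt h5

lemma exists_minSeq (hC : ∀ p, C ≤ f p) (ht : 0 < t) : ∃ y : ℕ → X, MinSeq f t x y := by
  have h : ∀ n : ℕ, ∃ y, FH f t x y < ft f t x + 1 / (n + 1) :=
    fun n => exists_near_min hC ht (by positivity)
  choose y hy using h
  refine ⟨y, ?_⟩
  have h1 : Tendsto (fun n : ℕ => ft f t x + 1 / (n + 1 : ℝ)) atTop (𝓝 (ft f t x)) := by
    simpa using tendsto_const_nhds.add (tendsto_one_div_add_atTop_nhds_zero_nat : Tendsto (fun n : ℕ => 1 / ((n : ℝ) + 1)) atTop (𝓝 0))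
  refine tendsto_of_tendsto_of_tendsto_of_le_of_le tendsto_const_nhds h1
    (fun n => ft_le hC ht (y n)) (fun n => (hy n).le)

lemma MinSeq.eventually_lt (hy : MinSeq f t x y) {ε : ℝ} (hε : 0 < ε) :
    ∀ᶠ n in atTop, FH f t x ((y : ℕ → X) n) < ft f t x + ε :=
  hy.eventually (eventually_lt_nhds (by linarith : ft f t x < ft f t x + ε))
variable {b : ℝ} {y : ℕ → X}

lemma MinSeq.eventually_dist (hC : ∀ p, C ≤ f p) (ht : 0 < t) (htb : t ≤ b)
    (hy : MinSeq f t x y) : ∀ᶠ n in atTop, dist x (y n) ≤ Mb f x C b :=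
  (hy.eventually_lt one_pos).mono fun n hn => dist_le_Mb hC ht htb hn.le

lemma MinSeq.isBoundedUnder_le (hC : ∀ p, C ≤ f p) (ht : 0 < t) (hy : MinSeq f t x y) :
    IsBoundedUnder (· ≤ ·) atTop (fun n => dist x (y n)) :=
  ⟨Mb f x C t, hy.eventually_dist hC ht le_rfl⟩

lemma dist_isBoundedUnder_ge :
    IsBoundedUnder (· ≥ ·) atTop (fun n => dist x (y n)) :=
  isBoundedUnder_of ⟨0, fun n => dist_nonneg⟩

lemma MinSeq.limsup_le (hC : ∀ p, C ≤ f p) (ht : 0 < t) (htb : t ≤ b) (hy : MinSeq f t x y) :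
    limsup (fun n => dist x (y n)) atTop ≤ Mb f x C b :=
  limsup_le_of_le dist_isBoundedUnder_ge.isCoboundedUnder_le (hy.eventually_dist hC ht htb)

lemma MinSeq.limsup_nonneg (hC : ∀ p, C ≤ f p) (ht : 0 < t) (hy : MinSeq f t x y) :
    0 ≤ limsup (fun n => dist x (y n)) atTop :=
  le_limsup_of_frequently_le (Frequently.of_forall fun n => dist_nonneg)
    (hy.isBoundedUnder_le hC ht)

lemma MinSeq.liminf_nonneg (hC : ∀ p, C ≤ f p) (ht : 0 < t) (hy : MinSeq f t x y) :
    0 ≤ liminf (fun n => dist x (y n)) atTop :=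
  le_liminf_of_le (hy.isBoundedUnder_le hC ht).isCoboundedUnder_ge
    (Eventually.of_forall fun n => dist_nonneg)

lemma MinSeq.liminf_le (hC : ∀ p, C ≤ f p) (ht : 0 < t) (htb : t ≤ b) (hy : MinSeq f t x y) :
    liminf (fun n => dist x (y n)) atTop ≤ Mb f x C b :=
  liminf_le_of_frequently_le ((hy.eventually_dist hC ht htb).frequently) dist_isBoundedUnder_ge

/-- the set of limsups of minimizing sequences -/
def DpSet (f : X × X → ℝ) (t : ℝ) (x : X) : Set ℝ :=
  { L : ℝ | ∃ y : ℕ → X, MinSeq f t x y ∧ Filter.limsup (fun n => dist x (y n)) atTop = L }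
def DmSet (f : X × X → ℝ) (t : ℝ) (x : X) : Set ℝ :=
  { L : ℝ | ∃ y : ℕ → X, MinSeq f t x y ∧ Filter.liminf (fun n => dist x (y n)) atTop = L }

lemma Dplus_def : Dplus f t x = sSup (DpSet f t x) := rfl
lemma Dminus_def : Dminus f t x = sInf (DmSet f t x) := rfl

lemma DpSet_nonempty (hC : ∀ p, C ≤ f p) (ht : 0 < t) : (DpSet f t x).Nonempty := by
  obtain ⟨y, hy⟩ := exists_minSeq (x := x) hC ht; exact ⟨_, y, hy, rfl⟩
lemma DmSet_nonempty (hC : ∀ p, C ≤ f p) (ht : 0 < t) : (DmSet f t x).Nonempty := by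
  obtain ⟨y, hy⟩ := exists_minSeq (x := x) hC ht; exact ⟨_, y, hy, rfl⟩

lemma DpSet_bddAbove (hC : ∀ p, C ≤ f p) (ht : 0 < t) : BddAbove (DpSet f t x) := by
  refine ⟨Mb f x C t, ?_⟩; rintro _ ⟨y, hy, rfl⟩; exact hy.limsup_le hC ht le_rfl
lemma DmSet_bddBelow (hC : ∀ p, C ≤ f p) (ht : 0 < t) : BddBelow (DmSet f t x) := by
  refine ⟨0, ?_⟩; rintro _ ⟨y, hy, rfl⟩; exact hy.liminf_nonneg hC ht

lemma Dplus_nonneg (hC : ∀ p, C ≤ f p) (ht : 0 < t) : 0 ≤ Dplus f t x := by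
  obtain ⟨L, y, hy, hL⟩ := DpSet_nonempty (x := x) hC ht
  exact le_trans (hL ▸ hy.limsup_nonneg hC ht) (le_csSup (DpSet_bddAbove hC ht) ⟨y, hy, hL⟩)

lemma Dplus_le_Mb (hC : ∀ p, C ≤ f p) (ht : 0 < t) (htb : t ≤ b) : Dplus f t x ≤ Mb f x C b := by
  refine csSup_le (DpSet_nonempty hC ht) ?_
  rintro _ ⟨y, hy, rfl⟩; exact hy.limsup_le hC ht htb

lemma Dminus_nonneg (hC : ∀ p, C ≤ f p) (ht : 0 < t) : 0 ≤ Dminus f t x :=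
  le_csInf (DmSet_nonempty hC ht) (by rintro _ ⟨y, hy, rfl⟩; exact hy.liminf_nonneg hC ht)

lemma Dminus_le_Mb (hC : ∀ p, C ≤ f p) (ht : 0 < t) (htb : t ≤ b) : Dminus f t x ≤ Mb f x C b := by
  obtain ⟨L, y, hy, hL⟩ := DmSet_nonempty (x := x) hC ht
  exact le_trans (csInf_le (DmSet_bddBelow hC ht) ⟨y, hy, hL⟩) (hL ▸ hy.liminf_le hC ht htb)

/-- algebraic identity relating `FH` at two times -/
lemma FH_time_diff (ht : t ≠ 0) (hs : s ≠ 0) (y : X) :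
    FH f s x y = FH f t x y + dist x y ^ 2 * (t - s) / (2 * s * t) := by
  unfold FH; field_simp; ring

/-- Key inequality, upper: for `0 < t < s`, `f_s ≤ f_t - D⁺_t² (s-t)/(2ts)`. -/
lemma P1 (hC : ∀ p, C ≤ f p) (ht : 0 < t) (hts : t < s) :
    ft f s x ≤ ft f t x - Dplus f t x ^ 2 * ((s - t) / (2 * t * s)) := by
  have hs : 0 < s := ht.trans hts
  set c : ℝ := (s - t) / (2 * t * s) with hc_def
  have hc : 0 < c := div_pos (by linarith) (by positivity)
  set P : ℝ := Dplus f t x with hP_def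
  have hP : 0 ≤ P := Dplus_nonneg hC ht
  have key : ∀ ε : ℝ, 0 < ε → ft f s x + P ^ 2 * c ≤ ft f t x + ε * (1 + 4 * P * c) := by
    intro ε hε
    obtain ⟨L, hLmem, hL⟩ := exists_lt_of_lt_csSup (DpSet_nonempty (x := x) hC ht)
      (show P - ε < sSup (DpSet f t x) from by rw [hP_def, Dplus_def]; linarith)
    obtain ⟨y, hy, hlimsup⟩ := hLmem
    have hfreq : ∃ᶠ n in atTop, L - ε < dist x (y n) :=
      frequently_lt_of_lt_limsup dist_isBoundedUnder_ge.isCoboundedUnder_le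
        (by rw [hlimsup]; linarith)
    obtain ⟨n, hn1, hn2⟩ := (hfreq.and_eventually (hy.eventually_lt hε)).exists
    have hdiff := FH_time_diff (f := f) (x := x) ht.ne' hs.ne' (y n)
    have h1 : ft f s x ≤ FH f s x (y n) := ft_le hC hs _
    have hd0 : (0:ℝ) ≤ dist x (y n) := dist_nonneg
    have hd : P - 2 * ε < dist x (y n) := by linarith
    have hd2 : P ^ 2 ≤ dist x (y n) ^ 2 + 4 * ε * P := by
      rcases le_or_gt P (2 * ε) with h | h
      · nlinarith
      · nlinarith
    have htc : dist x (y n) ^ 2 * (t - s) / (2 * s * t) = -(dist x (y n) ^ 2 * c) := by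
      rw [hc_def]; field_simp; ring
    rw [htc] at hdiff
    nlinarith [mul_le_mul_of_nonneg_right hd2 hc.le]
  have : ∀ ε' : ℝ, 0 < ε' → ft f s x + P ^ 2 * c ≤ ft f t x + ε' := by
    intro ε' hε'
    have hK : (0:ℝ) < 1 + 4 * P * c := by nlinarith
    have := key (ε' / (1 + 4 * P * c)) (by positivity)
    calc ft f s x + P ^ 2 * c ≤ ft f t x + ε' / (1 + 4 * P * c) * (1 + 4 * P * c) := this
      _ = ft f t x + ε' := by field_simp
  linarith [le_of_forall_pos_le_add this]

/-- Key inequality, lower: for `0 < t < s`, `f_t ≤ f_s + D⁻_s² (s-t)/(2ts)`. -/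
lemma P2 (hC : ∀ p, C ≤ f p) (ht : 0 < t) (hts : t < s) :
    ft f t x ≤ ft f s x + Dminus f s x ^ 2 * ((s - t) / (2 * t * s)) := by
  have hs : 0 < s := ht.trans hts
  set c : ℝ := (s - t) / (2 * t * s) with hc_def
  have hc : 0 < c := div_pos (by linarith) (by positivity)
  set Q : ℝ := Dminus f s x with hQ_def
  have hQ : 0 ≤ Q := Dminus_nonneg hC hs
  have key : ∀ ε : ℝ, 0 < ε → ε ≤ 1 →
      ft f t x ≤ ft f s x + Q ^ 2 * c + ε * (1 + 4 * Q * c + 4 * c) := by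
    intro ε hε hε1
    obtain ⟨L, hLmem, hL⟩ := exists_lt_of_csInf_lt (DmSet_nonempty (x := x) hC hs)
      (show sInf (DmSet f s x) < Q + ε from by rw [hQ_def, Dminus_def]; linarith)
    obtain ⟨y, hy, hliminf⟩ := hLmem
    have hfreq : ∃ᶠ n in atTop, dist x (y n) < L + ε :=
      frequently_lt_of_liminf_lt (hy.isBoundedUnder_le hC hs).isCoboundedUnder_ge
        (by rw [hliminf]; linarith)
    obtain ⟨n, hn1, hn2⟩ := (hfreq.and_eventually (hy.eventually_lt hε)).exists
    have hdiff := FH_time_diff (f := f) (x := x) hs.ne' ht.ne' (y n)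
    have h1 : ft f t x ≤ FH f t x (y n) := ft_le hC ht _
    have hd0 : (0:ℝ) ≤ dist x (y n) := dist_nonneg
    have hd : dist x (y n) < Q + 2 * ε := by linarith
    have hd2 : dist x (y n) ^ 2 ≤ Q ^ 2 + 4 * ε * Q + 4 * ε := by nlinarith
    have htc : dist x (y n) ^ 2 * (s - t) / (2 * t * s) = dist x (y n) ^ 2 * c := by
      rw [hc_def]; field_simp
    rw [htc] at hdiff
    nlinarith [mul_le_mul_of_nonneg_right hd2 hc.le]
  have : ∀ ε' : ℝ, 0 < ε' → ft f t x ≤ ft f s x + Q ^ 2 * c + ε' := by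
    intro ε' hε'
    have hK : (0:ℝ) < 1 + 4 * Q * c + 4 * c := by nlinarith
    rcases le_total (ε' / (1 + 4 * Q * c + 4 * c)) 1 with h | h
    · have := key _ (by positivity) h
      calc ft f t x ≤ ft f s x + Q ^ 2 * c
            + ε' / (1 + 4 * Q * c + 4 * c) * (1 + 4 * Q * c + 4 * c) := this
        _ = ft f s x + Q ^ 2 * c + ε' := by field_simp
    · have h1 := key 1 one_pos le_rfl
      have : 1 + 4 * Q * c + 4 * c ≤ ε' := (one_le_div hK).mp h
      linarith
  linarith [le_of_forall_pos_le_add this]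

lemma ft_anti (hC : ∀ p, C ≤ f p) (ht : 0 < t) (hts : t ≤ s) : ft f s x ≤ ft f t x := by
  rcases eq_or_lt_of_le hts with rfl | h
  · exact le_refl _
  · have h1 := P1 (x := x) hC ht h
    have hs : 0 < s := ht.trans h
    have hc : 0 ≤ (s - t) / (2 * t * s) := div_nonneg (by linarith) (by positivity)
    nlinarith [sq_nonneg (Dplus f t x)]

lemma lip_core (hC : ∀ p, C ≤ f p) {a b : ℝ} (ha : 0 < a)
    (hta : a ≤ t) (htb : t ≤ b) (hsa : a ≤ s) (hsb : s ≤ b) :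
    |ft f t x - ft f s x| ≤ Mb f x C b ^ 2 / (2 * a ^ 2) * |t - s| := by
  have hM : 0 ≤ Mb f x C b := Mb_nonneg
  -- wlog t < s
  have main : ∀ t' s' : ℝ, a ≤ t' → s' ≤ b → t' < s' →
      |ft f t' x - ft f s' x| ≤ Mb f x C b ^ 2 / (2 * a ^ 2) * |t' - s'| := by
    intro t' s' hta' hsb' hts'
    have ht' : 0 < t' := ha.trans_le hta'
    have hs' : 0 < s' := ht'.trans hts'
    have h1 := P1 (x := x) hC ht' hts'
    have h2 := P2 (x := x) hC ht' hts'
    have hQ : 0 ≤ Dminus f s' x := Dminus_nonneg hC hs'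
    have hQM : Dminus f s' x ≤ Mb f x C b := Dminus_le_Mb hC hs' hsb'
    have hc : (s' - t') / (2 * t' * s') ≤ (s' - t') / (2 * a ^ 2) := by
      apply div_le_div_of_nonneg_left (by linarith) (by positivity)
      nlinarith
    have habs1 : |ft f t' x - ft f s' x| = ft f t' x - ft f s' x := by
      rw [abs_of_nonneg]; linarith [ft_anti (x := x) hC ht' hts'.le]
    have habs2 : |t' - s'| = s' - t' := by rw [abs_of_nonpos] <;> linarith
    rw [habs1, habs2]
    have hc0 : 0 ≤ (s' - t') / (2 * t' * s') := div_nonneg (by linarith) (by positivity)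
    calc ft f t' x - ft f s' x ≤ Dminus f s' x ^ 2 * ((s' - t') / (2 * t' * s')) := by linarith
      _ ≤ Mb f x C b ^ 2 * ((s' - t') / (2 * a ^ 2)) := by
          apply mul_le_mul (by nlinarith) hc hc0 (by positivity)
      _ = Mb f x C b ^ 2 / (2 * a ^ 2) * (s' - t') := by ring
  rcases lt_trichotomy t s with h | rfl | h
  · exact main t s hta hsb h
  · simp
  · rw [abs_sub_comm (ft f t x) _, abs_sub_comm t s]; exact main s t hsa htb h

lemma lip_on (hC : ∀ p, C ≤ f p) {a b : ℝ} (ha : 0 < a) :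
    ∃ L : ℝ≥0, LipschitzOnWith L (fun t => ft f t x) (Set.Icc a b) := by
  refine ⟨Real.toNNReal (Mb f x C b ^ 2 / (2 * a ^ 2)), LipschitzOnWith.of_dist_le_mul ?_⟩
  intro t' ht' s' hs'
  rw [Real.dist_eq, Real.dist_eq]
  have hnn : (0:ℝ) ≤ Mb f x C b ^ 2 / (2 * a ^ 2) := by positivity
  rw [Real.coe_toNNReal _ hnn]
  exact lip_core hC ha ht'.1 ht'.2 hs'.1 hs'.2

lemma cont_pos (hC : ∀ p, C ≤ f p) (ht : 0 < t) : ContinuousAt (fun t => ft f t x) t := by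
  obtain ⟨L, hL⟩ := lip_on (x := x) (a := t / 2) (b := t + 1) hC (by linarith)
  have hmem : Set.Icc (t / 2) (t + 1) ∈ 𝓝 t :=
    Icc_mem_nhds (by linarith) (by linarith)
  exact (hL.continuousOn.continuousAt hmem)

lemma cont_zero_aux (hC : ∀ p, C ≤ f p) (hlsc : LowerSemicontinuous f) {ε : ℝ} (hε : 0 < ε)
    (hε1 : ε ≤ 1) :
    ∃ t₀ > 0, ∀ t : ℝ, 0 < t → t < t₀ → f (x, x) - 2 * ε ≤ ft f t x := by
  have h := hlsc (x, x) (f (x, x) - ε) (by linarith)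
  rw [Metric.eventually_nhds_iff] at h
  obtain ⟨δ, hδ, hball⟩ := h
  have hD : (0:ℝ) < f (x, x) + 1 - C := by linarith [C_le_fxx (x := x) hC]
  refine ⟨δ ^ 2 / (2 * (f (x, x) + 1 - C)), by positivity, fun t ht ht0 => ?_⟩
  obtain ⟨y, hy⟩ := exists_near_min (x := x) hC ht hε
  have hyd : dist x y ≤ Mb f x C t := dist_le_Mb hC ht le_rfl (by linarith)
  have hMδ : Mb f x C t < δ := by
    rw [Mb, show δ = Real.sqrt (δ ^ 2) from (Real.sqrt_sq hδ.le).symm]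
    apply Real.sqrt_lt_sqrt (by positivity)
    have := (lt_div_iff₀ (by positivity : (0:ℝ) < 2 * (f (x, x) + 1 - C))).mp ht0
    nlinarith
  have hdist : dist (x, y) (x, x) < δ := by
    have heq : dist (x, y) (x, x) = dist y x := by
      rw [Prod.dist_eq]; simp only [dist_self]; exact max_eq_right dist_nonneg
    rw [heq, dist_comm]; linarith
  have hfy : f (x, x) - ε < f (x, y) := hball hdist
  have : f (x, y) ≤ FH f t x y := by
    have h0 : (0:ℝ) ≤ dist x y ^ 2 / (2 * t) := by positivity
    unfold FH
    linarith
  linarith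

lemma cont_Ici (hC : ∀ p, C ≤ f p) (hlsc : LowerSemicontinuous f) :
    ContinuousOn (fun t => ft f t x) (Set.Ici 0) := by
  intro t ht
  rcases eq_or_lt_of_le (Set.mem_Ici.mp ht) with rfl | ht'
  · -- continuity at 0 within Ici 0
    rw [Metric.continuousWithinAt_iff]
    intro ε hε
    set ε' := min (ε / 3) 1 with hε'_def
    have hε'0 : 0 < ε' := lt_min (by linarith) one_pos
    obtain ⟨t₀, ht₀, hmain⟩ := cont_zero_aux (x := x) hC hlsc hε'0 (min_le_right _ _)
    refine ⟨t₀, ht₀, fun {s'} hs' hds' => ?_⟩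
    have h0 : ft f 0 x = f (x, x) := if_pos rfl
    rcases eq_or_lt_of_le (Set.mem_Ici.mp hs' : (0:ℝ) ≤ s') with rfl | hs'0
    · simpa using hε
    · have hub : ft f s' x ≤ f (x, x) := ft_le_fxx hC hs'0
      have hlb : f (x, x) - 2 * ε' ≤ ft f s' x := by
        apply hmain s' hs'0
        rw [Real.dist_eq, sub_zero, abs_of_pos hs'0] at hds'
        exact hds'
      have hε'3 : ε' ≤ ε / 3 := min_le_left _ _
      have habs : |ft f s' x - f (x, x)| < ε := abs_lt.mpr ⟨by linarith, by linarith⟩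
      simpa [Real.dist_eq, h0] using habs
  · exact (cont_pos hC ht').continuousWithinAt

lemma semiconcave (hC : ∀ p, C ≤ f p) {a b : ℝ} (ha : 0 < a) (hab : a ≤ b) :
    ∃ Cc : ℝ, 0 ≤ Cc ∧ ConcaveOn ℝ (Set.Icc a b) (fun t => ft f t x - Cc * t ^ 2) := by
  set M := Mb f x C b with hM_def
  have hM : 0 ≤ M := Mb_nonneg
  set Cc := M ^ 2 / (2 * a ^ 3) with hCc_def
  have hCc : 0 ≤ Cc := by positivity
  refine ⟨Cc, hCc, convex_Icc a b, ?_⟩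
  intro p hp q hq α β hα hβ hαβ
  simp only [smul_eq_mul]
  have hβα : β = 1 - α := by linarith
  subst hβα
  set r := α * p + (1 - α) * q with hr_def
  have hpa : a ≤ p := hp.1
  have hqa : a ≤ q := hq.1
  have hpb : p ≤ b := hp.2
  have hqb : q ≤ b := hq.2
  have hra : a ≤ r := by nlinarith
  have hrb : r ≤ b := by nlinarith
  have hp0 : 0 < p := lt_of_lt_of_le ha hpa
  have hq0 : 0 < q := lt_of_lt_of_le ha hqa
  have hr0 : 0 < r := lt_of_lt_of_le ha hra
  show α * (ft f p x - Cc * p ^ 2) + (1 - α) * (ft f q x - Cc * q ^ 2) ≤ ft f r x - Cc * r ^ 2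
  refine le_of_forall_pos_le_add fun ε hε => ?_
  have hε' : 0 < min ε 1 := lt_min hε one_pos
  obtain ⟨y, hy⟩ := exists_near_min (x := x) hC hr0 hε'
  have hyd : dist x y ≤ M := by
    rw [hM_def]
    exact dist_le_Mb hC hr0 hrb (by have := min_le_right ε 1; linarith)
  set d := dist x y with hd_def
  have hd0 : 0 ≤ d := dist_nonneg
  have hd2 : d ^ 2 ≤ 2 * a ^ 3 * Cc := by
    have h1 : d ^ 2 ≤ M ^ 2 := by nlinarith
    have h2 : 2 * a ^ 3 * Cc = M ^ 2 := by rw [hCc_def]; field_simp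
    linarith
  set S := α * (1 - α) * (p - q) ^ 2 with hS_def
  have hS : 0 ≤ S := mul_nonneg (mul_nonneg hα hβ) (sq_nonneg _)
  have key : α * (FH f p x y - Cc * p ^ 2) + (1 - α) * (FH f q x y - Cc * q ^ 2)
      ≤ FH f r x y - Cc * r ^ 2 := by
    unfold FH
    rw [← hd_def]
    have e1 : α * (d ^ 2 / (2 * p)) + (1 - α) * (d ^ 2 / (2 * q)) - d ^ 2 / (2 * r)
        = d ^ 2 / (2 * (p * q * r)) * S := by
      rw [hS_def]; field_simp; rw [hr_def]; ring
    have e2 : α * p ^ 2 + (1 - α) * q ^ 2 - r ^ 2 = S := by rw [hS_def, hr_def]; ring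
    have hfrac : d ^ 2 / (2 * (p * q * r)) ≤ Cc := by
      rw [div_le_iff₀ (by positivity)]
      have ha1 : a * a ≤ p * q := mul_le_mul hpa hqa ha.le hp0.le
      have ha2 : a * a * a ≤ p * q * r := mul_le_mul ha1 hra ha.le (by positivity)
      nlinarith [mul_le_mul_of_nonneg_left ha2 hCc]
    have hmm := mul_le_mul_of_nonneg_right hfrac hS
    have expand : α * (f (x, y) + d ^ 2 / (2 * p) - Cc * p ^ 2)
        + (1 - α) * (f (x, y) + d ^ 2 / (2 * q) - Cc * q ^ 2)
        - (f (x, y) + d ^ 2 / (2 * r) - Cc * r ^ 2)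
        = (α * (d ^ 2 / (2 * p)) + (1 - α) * (d ^ 2 / (2 * q)) - d ^ 2 / (2 * r))
          - Cc * (α * p ^ 2 + (1 - α) * q ^ 2 - r ^ 2) := by ring
    rw [e1, e2] at expand
    linarith [expand, hmm]
  have h1 : α * ft f p x ≤ α * FH f p x y :=
    mul_le_mul_of_nonneg_left (ft_le hC hp0 y) hα
  have h2 : (1 - α) * ft f q x ≤ (1 - α) * FH f q x y :=
    mul_le_mul_of_nonneg_left (ft_le hC hq0 y) hβ
  have h3 : FH f r x y < ft f r x + ε := by
    have := min_le_left ε 1; linarith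
  linarith [key, h1, h2]

/-- Diagonal construction: from near-minimizers at times `s k → t`, build a minimizing
sequence at `t` whose distances are sandwiched by `Dminus (s k)` and `Dplus (s k)`. -/
lemma diag (hC : ∀ p, C ≤ f p) (ht : 0 < t) (s : ℕ → ℝ) (hs : ∀ k, 0 < s k)
    (hst : Tendsto s atTop (𝓝 t)) :
    ∃ z : ℕ → X, MinSeq f t x z ∧ ∀ k,
      Dminus f (s k) x - 1 / (k + 1) < dist x (z k) ∧
      dist x (z k) < Dplus f (s k) x + 1 / (k + 1) := by
  have pick : ∀ k : ℕ, ∃ w : X,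
      FH f (s k) x w < ft f (s k) x + 1 / (k + 1) ∧
      Dminus f (s k) x - 1 / (k + 1) < dist x w ∧
      dist x w < Dplus f (s k) x + 1 / (k + 1) := by
    intro k
    obtain ⟨y, hy⟩ := exists_minSeq (x := x) hC (hs k)
    have hk : (0:ℝ) < 1 / (k + 1) := by positivity
    have h1 := hy.eventually_lt hk
    have h2 : ∀ᶠ n in atTop, dist x (y n) < Dplus f (s k) x + 1 / (k + 1) := by
      apply eventually_lt_of_limsup_lt _ (hy.isBoundedUnder_le hC (hs k))
      have h := le_csSup (DpSet_bddAbove (x := x) hC (hs k)) (⟨y, hy, rfl⟩ : _ ∈ DpSet f (s k) x)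
      rw [← Dplus_def] at h
      linarith
    have h3 : ∀ᶠ n in atTop, Dminus f (s k) x - 1 / (k + 1) < dist x (y n) := by
      apply eventually_lt_of_lt_liminf _ dist_isBoundedUnder_ge
      have h := csInf_le (DmSet_bddBelow (x := x) hC (hs k)) (⟨y, hy, rfl⟩ : _ ∈ DmSet f (s k) x)
      rw [← Dminus_def] at h
      linarith
    obtain ⟨n, hn1, hn2, hn3⟩ := (h1.and (h2.and h3)).exists
    exact ⟨y n, hn1, hn3, hn2⟩
  choose z hz1 hz2 hz3 using pick
  refine ⟨z, ?_, fun k => ⟨hz2 k, hz3 k⟩⟩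
  -- prove `z` is a minimizing sequence at `t`
  set R : ℝ := Mb f x C (t + 1) + 1 with hR_def
  have hR0 : 0 ≤ R := by have := Mb_nonneg (f := f) (x := x) (C := C) (b := t + 1); linarith
  have hev : ∀ᶠ k in atTop, s k ∈ Set.Icc (t / 2) (t + 1) :=
    hst (Icc_mem_nhds (by linarith) (by linarith))
  have hk1 : ∀ᶠ (k : ℕ) in atTop, (1:ℝ) / (k + 1) ≤ 1 := by
    filter_upwards [] with k
    rw [div_le_one (by positivity)]
    linarith [Nat.cast_nonneg (α := ℝ) k]
  have hub : ∀ᶠ k in atTop,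
      FH f t x (z k) ≤ ft f (s k) x + 1 / (k + 1) + R ^ 2 * |s k - t| / t ^ 2 := by
    filter_upwards [hev, hk1] with k hk hk1'
    have hsk := hs k
    have hd0 : (0:ℝ) ≤ dist x (z k) := dist_nonneg
    have hdR : dist x (z k) ≤ R := by
      have h1 : FH f (s k) x (z k) ≤ ft f (s k) x + 1 := by
        have := hz1 k; linarith
      have := dist_le_Mb hC hsk hk.2 h1
      linarith
    have hdiff := FH_time_diff (f := f) (x := x) (t := s k) (s := t) hsk.ne' ht.ne' (z k)
    have hbound : dist x (z k) ^ 2 * (s k - t) / (2 * t * s k) ≤ R ^ 2 * |s k - t| / t ^ 2 := by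
      rw [div_le_div_iff₀ (by positivity) (by positivity)]
      have e1 : dist x (z k) ^ 2 * (s k - t) ≤ R ^ 2 * |s k - t| := by
        calc dist x (z k) ^ 2 * (s k - t) ≤ dist x (z k) ^ 2 * |s k - t| :=
              mul_le_mul_of_nonneg_left (le_abs_self _) (by positivity)
          _ ≤ R ^ 2 * |s k - t| :=
              mul_le_mul_of_nonneg_right (by nlinarith) (abs_nonneg _)
      have e2 : t ^ 2 ≤ 2 * t * s k := by nlinarith [hk.1]
      have h3 : (0:ℝ) ≤ R ^ 2 * |s k - t| := by positivity
      nlinarith [mul_le_mul_of_nonneg_left e2 h3]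
    have := hz1 k
    linarith
  have hlb : ∀ᶠ k in atTop, ft f t x ≤ FH f t x (z k) :=
    Eventually.of_forall fun k => ft_le hC ht _
  have htend : Tendsto (fun k => ft f (s k) x + 1 / (k + 1) + R ^ 2 * |s k - t| / t ^ 2)
      atTop (𝓝 (ft f t x)) := by
    have t1 : Tendsto (fun k => ft f (s k) x) atTop (𝓝 (ft f t x)) :=
      (cont_pos (x := x) hC ht).tendsto.comp hst
    have t2 : Tendsto (fun k : ℕ => 1 / ((k:ℝ) + 1)) atTop (𝓝 0) :=
      tendsto_one_div_add_atTop_nhds_zero_nat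
    have t3 : Tendsto (fun k => R ^ 2 * |s k - t| / t ^ 2) atTop (𝓝 0) := by
      have habs : Tendsto (fun k => |s k - t|) atTop (𝓝 0) := by
        have := (hst.sub (tendsto_const_nhds (x := t))).abs
        simpa using this
      have := habs.const_mul (R ^ 2 / t ^ 2)
      simp only [mul_zero] at this
      convert this using 2 with k
      ring
    have := (t1.add t2).add t3
    simpa using this
  exact tendsto_of_tendsto_of_tendsto_of_le_of_le' tendsto_const_nhds htend hlb hub

lemma one_div_nat_tendsto : Tendsto (fun k : ℕ => 1 / ((k:ℝ) + 1)) atTop (𝓝 0) :=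
  tendsto_one_div_add_atTop_nhds_zero_nat

lemma ev_right (hC : ∀ p, C ≤ f p) (ht : 0 < t) {ε : ℝ} (hε : 0 < ε) :
    ∀ᶠ s in 𝓝[>] t, Dminus f s x < Dplus f t x + ε := by
  by_contra hcon
  rw [not_eventually] at hcon
  have pick : ∀ k : ℕ, ∃ s', s' ∈ Set.Ioo t (t + 1 / (k + 1)) ∧
      Dplus f t x + ε ≤ Dminus f s' x := by
    intro k
    have hne : Set.Ioo t (t + 1 / (k + 1 : ℝ)) ∈ 𝓝[>] t :=
      Ioo_mem_nhdsGT_of_mem ⟨le_refl t, by linarith [one_div_pos.mpr (by positivity : (0:ℝ) < (k:ℝ) + 1)]⟩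
    obtain ⟨s', hs', hprop⟩ := Filter.frequently_iff.mp hcon hne
    exact ⟨s', hs', not_lt.mp hprop⟩
  choose s' hs1 hs2 using pick
  have hspos : ∀ k, 0 < s' k := fun k => ht.trans (hs1 k).1
  have hstend : Tendsto s' atTop (𝓝 t) := by
    have hub : Tendsto (fun k : ℕ => t + 1 / ((k:ℝ) + 1)) atTop (𝓝 t) := by
      have := tendsto_const_nhds (x := t) (f := atTop (α := ℕ))|>.add one_div_nat_tendsto
      simpa using this
    exact tendsto_of_tendsto_of_tendsto_of_le_of_le tendsto_const_nhds hub
      (fun k => (hs1 k).1.le) (fun k => (hs1 k).2.le)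
  obtain ⟨z, hz, hzb⟩ := diag (x := x) hC ht s' hspos hstend
  have h1 : limsup (fun k => dist x (z k)) atTop ≤ Dplus f t x := by
    have := le_csSup (DpSet_bddAbove (x := x) hC ht) (⟨z, hz, rfl⟩ : _ ∈ DpSet f t x)
    rw [← Dplus_def] at this; exact this
  have h2 : Dplus f t x + ε ≤ limsup (fun k => dist x (z k)) atTop := by
    apply le_limsup_of_le (hz.isBoundedUnder_le hC ht)
    intro b hb
    refine le_of_forall_pos_le_add fun δ hδ => ?_
    obtain ⟨K, hK⟩ := eventually_atTop.mp hb
    obtain ⟨K', hK'⟩ := eventually_atTop.mp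
      ((one_div_nat_tendsto).eventually (eventually_le_nhds hδ))
    set k := max K K'
    have hzk := (hzb k).1
    have := hs2 k
    have h3 := hK k (le_max_left _ _)
    have h4 := hK' k (le_max_right _ _)
    linarith
  linarith

lemma ev_left (hC : ∀ p, C ≤ f p) (ht : 0 < t) {ε : ℝ} (hε : 0 < ε) :
    ∀ᶠ s in 𝓝[<] t, Dminus f t x - ε < Dplus f s x := by
  by_contra hcon
  rw [not_eventually] at hcon
  have pick : ∀ k : ℕ, ∃ s', s' ∈ Set.Ioo (max (t - 1 / (k + 1)) (t / 2)) t ∧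
      Dplus f s' x ≤ Dminus f t x - ε := by
    intro k
    have hne : Set.Ioo (max (t - 1 / (k + 1 : ℝ)) (t / 2)) t ∈ 𝓝[<] t := by
      apply Ioo_mem_nhdsLT_of_mem
      constructor
      · apply max_lt
        · have : (0:ℝ) < 1 / (k + 1 : ℝ) := by positivity
          linarith
        · linarith
      · exact le_refl t
    obtain ⟨s', hs', hprop⟩ := Filter.frequently_iff.mp hcon hne
    exact ⟨s', hs', not_lt.mp hprop⟩
  choose s' hs1 hs2 using pick
  have hspos : ∀ k, 0 < s' k := fun k =>
    lt_trans (by linarith : (0:ℝ) < t / 2) (lt_of_le_of_lt (le_max_right _ _) (hs1 k).1)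
  have hstend : Tendsto s' atTop (𝓝 t) := by
    have hlb : Tendsto (fun k : ℕ => t - 1 / ((k:ℝ) + 1)) atTop (𝓝 t) := by
      have := tendsto_const_nhds (x := t) (f := atTop (α := ℕ))|>.sub one_div_nat_tendsto
      simpa using this
    refine tendsto_of_tendsto_of_tendsto_of_le_of_le hlb tendsto_const_nhds
      (fun k => ?_) (fun k => (hs1 k).2.le)
    exact le_trans (le_max_left _ _) (hs1 k).1.le
  obtain ⟨z, hz, hzb⟩ := diag (x := x) hC ht s' hspos hstend
  have h1 : Dminus f t x ≤ liminf (fun k => dist x (z k)) atTop := by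
    have := csInf_le (DmSet_bddBelow (x := x) hC ht) (⟨z, hz, rfl⟩ : _ ∈ DmSet f t x)
    rw [← Dminus_def] at this; exact this
  have h2 : liminf (fun k => dist x (z k)) atTop ≤ Dminus f t x - ε := by
    refine le_of_forall_pos_le_add fun δ hδ => ?_
    obtain ⟨K', hK'⟩ := eventually_atTop.mp
      ((one_div_nat_tendsto).eventually (eventually_le_nhds hδ))
    apply liminf_le_of_frequently_le _ dist_isBoundedUnder_ge
    rw [frequently_atTop]
    intro K
    refine ⟨max K K', le_max_left _ _, ?_⟩
    set k := max K K'
    have hzk := (hzb k).2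
    have := hs2 k
    have h4 := hK' k (le_max_right _ _)
    linarith
  linarith

lemma slope_up (hC : ∀ p, C ≤ f p) (ht : 0 < t) (hts : t < s) :
    (ft f s x - ft f t x) / (s - t) ≤ -(Dplus f t x ^ 2) / (2 * t * s) := by
  have hs : 0 < s := ht.trans hts
  have hst : 0 < s - t := by linarith
  have h1 := P1 (x := x) hC ht hts
  rw [div_le_div_iff₀ hst (by positivity)]
  have e : -(Dplus f t x ^ 2 * ((s - t) / (2 * t * s))) * (2 * t * s)
      = -(Dplus f t x ^ 2) * (s - t) := by field_simp
  have := mul_le_mul_of_nonneg_right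
    (show ft f s x - ft f t x ≤ -(Dplus f t x ^ 2 * ((s - t) / (2 * t * s))) by linarith)
    (show (0:ℝ) ≤ 2 * t * s by positivity)
  linarith

lemma slope_lo (hC : ∀ p, C ≤ f p) (ht : 0 < t) (hts : t < s) :
    -(Dminus f s x ^ 2) / (2 * t * s) ≤ (ft f s x - ft f t x) / (s - t) := by
  have hs : 0 < s := ht.trans hts
  have hst : 0 < s - t := by linarith
  have h2 := P2 (x := x) hC ht hts
  rw [div_le_div_iff₀ (by positivity) hst]
  have e : Dminus f s x ^ 2 * ((s - t) / (2 * t * s)) * (2 * t * s)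
      = Dminus f s x ^ 2 * (s - t) := by field_simp
  have := mul_le_mul_of_nonneg_right
    (show ft f t x - ft f s x ≤ Dminus f s x ^ 2 * ((s - t) / (2 * t * s)) by linarith)
    (show (0:ℝ) ≤ 2 * t * s by positivity)
  nlinarith

lemma deriv_right (hC : ∀ p, C ≤ f p) (ht : 0 < t) :
    HasDerivWithinAt (fun s => ft f s x) (-(Dplus f t x ^ 2 / (2 * t ^ 2))) (Set.Ici t) t := by
  rw [hasDerivWithinAt_iff_tendsto_slope, Set.Ici_sdiff_left]
  rw [Metric.tendsto_nhds]
  intro ε' hε'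
  set P := Dplus f t x with hP_def
  have hP : 0 ≤ P := Dplus_nonneg hC ht
  set ε : ℝ := min 1 (t ^ 2 * ε' / (2 * (2 * P + 1))) with hε_def
  have hε : 0 < ε := lt_min one_pos (by positivity)
  have hε1 : ε ≤ 1 := min_le_left _ _
  have hε2 : ε ≤ t ^ 2 * ε' / (2 * (2 * P + 1)) := min_le_right _ _
  set δ : ℝ := t ^ 3 * ε' / (P ^ 2 + 1) with hδ_def
  have hδ : 0 < δ := by positivity
  have hIoo : Set.Ioo t (t + δ) ∈ 𝓝[>] t :=
    Ioo_mem_nhdsGT_of_mem ⟨le_refl t, by linarith⟩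
  filter_upwards [ev_right (x := x) hC ht hε, hIoo] with s hQs hs
  have hts : t < s := hs.1
  have hsδ : s < t + δ := hs.2
  have hs0 : 0 < s := ht.trans hts
  have hQ0 : 0 ≤ Dminus f s x := Dminus_nonneg hC hs0
  rw [slope_def_field, Real.dist_eq]
  have hup := slope_up (x := x) hC ht hts
  have hlo := slope_lo (x := x) hC ht hts
  rw [abs_lt]
  have ht2s : (0:ℝ) < 2 * t * s := by positivity
  have ht2 : (0:ℝ) < 2 * t ^ 2 := by positivity
  have hle : 2 * t ^ 2 ≤ 2 * t * s := by nlinarith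
  set Q := Dminus f s x
  have eglue1 : -(Q ^ 2) / (2 * t * s) = -(Q ^ 2 / (2 * t * s)) := by ring
  have eglue2 : -(P ^ 2) / (2 * t * s) = -(P ^ 2 / (2 * t * s)) := by ring
  constructor
  · -- lower bound
    have b1 : Q ^ 2 ≤ (P + ε) ^ 2 := by nlinarith
    have b2 : (P + ε) ^ 2 / (2 * t * s) ≤ (P + ε) ^ 2 / (2 * t ^ 2) :=
      div_le_div_of_nonneg_left (by positivity) ht2 hle
    have b3 : Q ^ 2 / (2 * t * s) ≤ (P + ε) ^ 2 / (2 * t * s) := by gcongr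
    have key1 : (P + ε) ^ 2 / (2 * t ^ 2) - P ^ 2 / (2 * t ^ 2)
        = ε * (2 * P + ε) / (2 * t ^ 2) := by ring
    have key2 : ε * (2 * P + ε) / (2 * t ^ 2) < ε' := by
      rw [div_lt_iff₀ ht2]
      have h1 : ε * (2 * P + ε) ≤ ε * (2 * P + 1) := by nlinarith
      have h2 : ε * (2 * (2 * P + 1)) ≤ t ^ 2 * ε' :=
        (le_div_iff₀ (by positivity)).mp hε2
      nlinarith
    linarith
  · -- upper bound
    have key3 : P ^ 2 / (2 * t ^ 2) - P ^ 2 / (2 * t * s)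
        = P ^ 2 * (s - t) / (2 * t ^ 2 * s) := by field_simp
    have b4 : P ^ 2 * (s - t) / (2 * t ^ 2 * s) ≤ P ^ 2 * δ / (2 * t ^ 3) := by
      apply div_le_div₀ (by positivity) (by nlinarith) (by positivity) (by nlinarith)
    have e5 : P ^ 2 * δ / (2 * t ^ 3) = P ^ 2 * ε' / (2 * (P ^ 2 + 1)) := by
      rw [hδ_def]; field_simp
    have b5 : P ^ 2 * ε' / (2 * (P ^ 2 + 1)) < ε' := by
      rw [div_lt_iff₀ (by positivity)]; nlinarith
    linarith

lemma deriv_left (hC : ∀ p, C ≤ f p) (ht : 0 < t) :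
    HasDerivWithinAt (fun s => ft f s x) (-(Dminus f t x ^ 2 / (2 * t ^ 2))) (Set.Iic t) t := by
  rw [hasDerivWithinAt_iff_tendsto_slope, Set.Iic_diff_right]
  rw [Metric.tendsto_nhds]
  intro ε' hε'
  set Q := Dminus f t x with hQ_def
  have hQ : 0 ≤ Q := Dminus_nonneg hC ht
  set ε : ℝ := min 1 (t ^ 2 * ε' / (2 * (2 * Q + 1))) with hε_def
  have hε : 0 < ε := lt_min one_pos (by positivity)
  have hε1 : ε ≤ 1 := min_le_left _ _
  have hε2 : ε ≤ t ^ 2 * ε' / (2 * (2 * Q + 1)) := min_le_right _ _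
  set δ : ℝ := min (t / 2) (t ^ 3 * ε' / (2 * (Q ^ 2 + 1))) with hδ_def
  have hδ : 0 < δ := lt_min (by linarith) (by positivity)
  have hδ1 : δ ≤ t / 2 := min_le_left _ _
  have hδ2 : δ ≤ t ^ 3 * ε' / (2 * (Q ^ 2 + 1)) := min_le_right _ _
  have hIoo : Set.Ioo (t - δ) t ∈ 𝓝[<] t :=
    Ioo_mem_nhdsLT_of_mem ⟨by linarith, le_refl t⟩
  filter_upwards [ev_left (x := x) hC ht hε, hIoo] with s hPs hs
  have hst : s < t := hs.2
  have hsδ : t - δ < s := hs.1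
  have hs0 : 0 < s := by linarith
  have hP0 : 0 ≤ Dplus f s x := Dplus_nonneg hC hs0
  rw [slope_def_field, Real.dist_eq]
  have hup := slope_up (x := x) (t := s) (s := t) hC hs0 hst
  have hlo := slope_lo (x := x) (t := s) (s := t) hC hs0 hst
  -- rewrite the slope with denominator t - s
  have hslope : (ft f s x - ft f t x) / (s - t) = (ft f t x - ft f s x) / (t - s) := by
    rw [div_eq_div_iff (by linarith) (by linarith)]; ring
  rw [abs_lt, hslope]
  rw [← hQ_def] at hlo
  have ht2s : (0:ℝ) < 2 * s * t := by positivity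
  have ht2 : (0:ℝ) < 2 * t ^ 2 := by positivity
  have hle : 2 * s * t ≤ 2 * t ^ 2 := by nlinarith
  set P := Dplus f s x
  have eglue1 : -(Q ^ 2) / (2 * s * t) = -(Q ^ 2 / (2 * s * t)) := by ring
  have eglue2 : -(P ^ 2) / (2 * s * t) = -(P ^ 2 / (2 * s * t)) := by ring
  constructor
  · -- lower:  -ε' < slope - D  where slope ≥ -(Q²)/(2st), D = -(Q²/(2t²))
    have b2 : Q ^ 2 / (2 * t ^ 2) ≤ Q ^ 2 / (2 * s * t) :=
      div_le_div_of_nonneg_left (by positivity) ht2s hle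
    have key3 : Q ^ 2 / (2 * s * t) - Q ^ 2 / (2 * t ^ 2)
        = Q ^ 2 * (t - s) / (2 * s * t ^ 2) := by field_simp
    have b4 : Q ^ 2 * (t - s) / (2 * s * t ^ 2) ≤ Q ^ 2 * δ / (t ^ 3) := by
      apply div_le_div₀ (by positivity) (by nlinarith) (by positivity) (by nlinarith)
    have b5 : Q ^ 2 * δ / (t ^ 3) < ε' := by
      rw [div_lt_iff₀ (by positivity)]
      have h1 : Q ^ 2 * δ ≤ Q ^ 2 * (t ^ 3 * ε' / (2 * (Q ^ 2 + 1))) := by nlinarith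
      have h2 : Q ^ 2 * (t ^ 3 * ε' / (2 * (Q ^ 2 + 1))) < ε' * t ^ 3 := by
        rw [mul_div_assoc']
        rw [div_lt_iff₀ (by positivity)]
        have hA : (0:ℝ) < t ^ 3 * ε' := by positivity
        nlinarith [mul_nonneg hA.le (sq_nonneg Q)]
      linarith
    linarith
  · -- upper: slope - D < ε' where slope ≤ -(P²)/(2st)
    have b1 : (Q - ε) ^ 2 ≤ P ^ 2 ∨ Q < ε := by
      rcases le_or_gt ε Q with h | h
      · left
        rw [hQ_def] at h ⊢
        nlinarith [hPs, hP0]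
      · right; exact h
    have key2 : Q ^ 2 - (Q - ε) ^ 2 ≤ 2 * ε * Q := by nlinarith
    have hεQ : ε * (2 * Q + 1) ≤ t ^ 2 * ε' / 2 := by
      have h2 : ε * (2 * (2 * Q + 1)) ≤ t ^ 2 * ε' :=
        (le_div_iff₀ (by positivity)).mp hε2
      linarith
    have hmain : -(P ^ 2) / (2 * s * t) + Q ^ 2 / (2 * t ^ 2) < ε' := by
      rcases b1 with h | h
      · have c1 : (Q - ε) ^ 2 / (2 * s * t) ≤ P ^ 2 / (2 * s * t) := by gcongr
        have c2 : (Q - ε) ^ 2 / (2 * t ^ 2) ≤ (Q - ε) ^ 2 / (2 * s * t) :=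
          div_le_div_of_nonneg_left (by positivity) ht2s hle
        have c3 : Q ^ 2 / (2 * t ^ 2) - (Q - ε) ^ 2 / (2 * t ^ 2)
            = (Q ^ 2 - (Q - ε) ^ 2) / (2 * t ^ 2) := by ring
        have c4 : (Q ^ 2 - (Q - ε) ^ 2) / (2 * t ^ 2) ≤ 2 * ε * Q / (2 * t ^ 2) := by gcongr
        have c5 : 2 * ε * Q / (2 * t ^ 2) < ε' := by
          rw [div_lt_iff₀ ht2]
          nlinarith
        have eg : -(P ^ 2) / (2 * s * t) ≤ -((Q - ε) ^ 2 / (2 * s * t)) := by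
          rw [eglue2]; linarith
        linarith
      · -- Q < ε : then Q² small
        have c5 : Q ^ 2 / (2 * t ^ 2) < ε' := by
          rw [div_lt_iff₀ ht2]
          nlinarith
        have : -(P ^ 2) / (2 * s * t) ≤ 0 := by
          rw [eglue2]
          have hh : 0 ≤ P ^ 2 / (2 * s * t) := by positivity
          linarith
        linarith
    linarith

end HopfLaxLemmas

set_option maxHeartbeats 1000000 in
/-- For every `x ∈ X`, the function `t ↦ f_t(x)` is continuous on `[0,∞)`, locally Lipschitz
and locally semiconcave on `(0,∞)`, and for every `t > 0` its left and right derivatives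
exist and equal `-(D⁻_t(x))²/(2t²)` and `-(D⁺_t(x))²/(2t²)` respectively. -/
theorem statement0 [CompleteSpace X] (hX : IsLengthSpace X)
    (f : X × X → ℝ) (hlsc : LowerSemicontinuous f)
    (hbdd : ∃ C : ℝ, ∀ p : X × X, C ≤ f p)
    (hrev : ∀ x y z : X, f (x, y) + f (y, z) ≤ f (x, z)) (x : X) :
    ContinuousOn (fun t => ft f t x) (Set.Ici 0) ∧
    (∀ a b : ℝ, 0 < a → a ≤ b →
      ∃ L : ℝ≥0, LipschitzOnWith L (fun t => ft f t x) (Set.Icc a b)) ∧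
    (∀ a b : ℝ, 0 < a → a ≤ b →
      ∃ C : ℝ, 0 ≤ C ∧ ConcaveOn ℝ (Set.Icc a b) (fun t => ft f t x - C * t ^ 2)) ∧
    (∀ t : ℝ, 0 < t →
      HasDerivWithinAt (fun s => ft f s x)
        (-(Dminus f t x ^ 2 / (2 * t ^ 2))) (Set.Iic t) t ∧
      HasDerivWithinAt (fun s => ft f s x)
        (-(Dplus f t x ^ 2 / (2 * t ^ 2))) (Set.Ici t) t) := by
  obtain ⟨C, hC⟩ := hbdd
  refine ⟨cont_Ici hC hlsc, fun a b ha hab => lip_on hC ha,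
    fun a b ha hab => semiconcave hC ha hab,
    fun t ht => ⟨deriv_left hC ht, deriv_right hC ht⟩⟩
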